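/- Let W be a regular wreath-like product of an abelian group A and a group B, with section σ: B → W of the canonical map ε: W → B. For a ∈ A^{(B)} and X ⊆ B define π_X(a) = ∏_{x∈X} (σ(x)⁻¹ a σ(x))(1). Then for any a ∈ A^{(B)}, b ∈ B, and w ∈ W, one has π_{bR}(w⁻¹ a w) = π_{ε(w)bR}(a) for every subgroup R ≤ B; consequently the set N_R = { a ∈ A^{(B)} : π_{bR}(a) = 1 for all b ∈ B } is a normal subgroup of W. -/
import Mathlib


open Pointwise

/-- `W` is a regular wreath-like product of the abelian group `A` (written additively)
and the group `B`: `ε : W → B` is the canonical surjection, and `ι` identifies the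
base `A^{(B)} = ⊕_{b∈B} A` (viewed as a multiplicative group) with `ker ε`, the
conjugation action of `w ∈ W` on the base shifting indices by left multiplication
by `ε w`. -/
def IsRegularWreathLikeAb (A : Type*) [AddCommGroup A] (B : Type*) [Group B]
    (W : Type*) [Group W] (ε : W →* B)
    (ι : Multiplicative (DirectSum B fun _ : B => A) →* W) : Prop :=
  Function.Surjective ε ∧ Function.Injective ι ∧ ι.range = ε.ker ∧
  ∀ (w : W) (f : DirectSum B fun _ : B => A),
    ∃ f' : DirectSum B fun _ : B => A,
      ι (Multiplicative.ofAdd f') = w * ι (Multiplicative.ofAdd f) * w⁻¹ ∧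
      ∀ b : B, f' (ε w * b) = f b

/-- let `W` be a regular wreath-like product of an abelian group `A` and a
group `B`, and for `a ∈ A^{(B)}` and `X ⊆ B` let `π_X(a) = ∑_{x∈X} a(x)` (the sum of
the coordinates of `a` over `X`; in multiplicative notation,
`π_X(a) = ∏_{x∈X} (σ(x)⁻¹ a σ(x))(1)`).  Then for any `a ∈ A^{(B)}` (with coordinate
function `f`), `b ∈ B` and `w ∈ W`, one has `π_{bR}(w⁻¹ a w) = π_{ε(w)bR}(a)` for
every subgroup `R ≤ B`; consequently the set
`N_R = { a ∈ A^{(B)} : π_{bR}(a) = 1 for all b ∈ B }` is a normal subgroup of `W`. -/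
lemma sum_coset_shift {A : Type*} [AddCommGroup A] {B : Type*} [Group B]
    (f : B → A) (c : B) (s : Set B) :
    (∑ᶠ x ∈ s, f (c * x)) = ∑ᶠ y ∈ c • s, f y := by
  rw [show c • s = (fun x => c * x) '' s from rfl,
    finsum_mem_image (fun x _ y _ hxy => mul_left_cancel hxy)]

lemma supp_fin {A : Type*} [AddCommGroup A] {B : Type*} [Group B]
    (f : DirectSum B fun _ : B => A) (s : Set B) :
    (s ∩ Function.support fun x => f x).Finite := by
  classical
  apply Set.Finite.subset (DFinsupp.support f).finite_toSet
  intro x hx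
  simpa using hx.2

def NRadd {A : Type*} [AddCommGroup A] {B : Type*} [Group B] (R : Subgroup B) :
    AddSubgroup (DirectSum B fun _ : B => A) where
  carrier := {f | ∀ b : B, (∑ᶠ x ∈ b • (R : Set B), f x) = 0}
  zero_mem' := by intro b; simp
  add_mem' := by
    intro f g hf hg b
    have : (∑ᶠ x ∈ b • (R : Set B), (f + g) x)
        = (∑ᶠ x ∈ b • (R : Set B), f x) + ∑ᶠ x ∈ b • (R : Set B), g x := by
      rw [← finsum_mem_add_distrib' (supp_fin f _) (supp_fin g _)]
      exact finsum_mem_congr rfl (fun x _ => by simp)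
    rw [this, hf b, hg b, add_zero]
  neg_mem' := by
    intro f hf b
    have h0 : (∑ᶠ x ∈ b • (R : Set B), ((-f) + f) x) = 0 := by
      simp
    rw [show (∑ᶠ x ∈ b • (R : Set B), ((-f) + f) x)
        = (∑ᶠ x ∈ b • (R : Set B), (-f) x) + ∑ᶠ x ∈ b • (R : Set B), f x from by
      rw [← finsum_mem_add_distrib' (supp_fin (-f) _) (supp_fin f _)]
      exact finsum_mem_congr rfl (fun x _ => DFinsupp.add_apply _ _ _), hf b, add_zero] at h0
    exact h0

theorem pi_conj_and_NR_normal {A : Type*} [AddCommGroup A] {B : Type*} [Group B]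
    {W : Type*} [Group W] (ε : W →* B)
    (ι : Multiplicative (DirectSum B fun _ : B => A) →* W)
    (h : IsRegularWreathLikeAb A B W ε ι) (R : Subgroup B) :
    (∀ (f f' : DirectSum B fun _ : B => A) (w : W) (b : B),
      ι (Multiplicative.ofAdd f') = w⁻¹ * ι (Multiplicative.ofAdd f) * w →
      (∑ᶠ x ∈ b • (R : Set B), f' x) = ∑ᶠ x ∈ (ε w * b) • (R : Set B), f x) ∧
    ∃ NR : Subgroup W, NR.Normal ∧
      (NR : Set W) = ι '' (Multiplicative.ofAdd ''
        {f : DirectSum B fun _ : B => A | ∀ b : B, (∑ᶠ x ∈ b • (R : Set B), f x) = 0}) := by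
  obtain ⟨hsurj, hinj, hker, hconj⟩ := h
  constructor
  · intro f f' w b hff'
    obtain ⟨f'', hι, hb⟩ := hconj w⁻¹ f
    have hf'f'' : f' = f'' := by
      apply hinj
      show ι (Multiplicative.ofAdd f') = ι (Multiplicative.ofAdd f'')
      rw [hι, hff']
      group
    have key : ∀ x : B, f' x = f (ε w * x) := by
      intro x
      have := hb (ε w * x)
      simp only [map_inv, inv_mul_cancel_left] at this
      rw [hf'f'', this]
    calc (∑ᶠ x ∈ b • (R : Set B), f' x)
        = ∑ᶠ x ∈ b • (R : Set B), f (ε w * x) :=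
          finsum_mem_congr rfl (fun x _ => key x)
      _ = ∑ᶠ y ∈ ε w • (b • (R : Set B)), f y := sum_coset_shift _ _ _
      _ = ∑ᶠ y ∈ (ε w * b) • (R : Set B), f y := by rw [smul_smul]
  · refine ⟨(AddSubgroup.toSubgroup (NRadd R)).map ι, ⟨?_⟩, ?_⟩
    · rintro n hn w
      obtain ⟨g, hg, rfl⟩ := hn
      have hg : ∀ b : B, (∑ᶠ x ∈ b • (R : Set B), Multiplicative.toAdd g x) = 0 := hg
      obtain ⟨f', hι, hb⟩ := hconj w (Multiplicative.toAdd g)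
      have key : ∀ x : B, f' x = Multiplicative.toAdd g ((ε w)⁻¹ * x) := by
        intro x
        have := hb ((ε w)⁻¹ * x)
        rwa [mul_inv_cancel_left] at this
      refine ⟨Multiplicative.ofAdd f', ?_, by simpa using hι⟩
      intro b
      have hg' : ∀ b : B, (∑ᶠ x ∈ b • (R : Set B), Multiplicative.toAdd g x) = 0 := hg
      calc (∑ᶠ x ∈ b • (R : Set B), f' x)
          = ∑ᶠ x ∈ b • (R : Set B), Multiplicative.toAdd g ((ε w)⁻¹ * x) :=
            finsum_mem_congr rfl (fun x _ => key x)
        _ = ∑ᶠ y ∈ (ε w)⁻¹ • (b • (R : Set B)), Multiplicative.toAdd g y :=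
            sum_coset_shift _ _ _
        _ = ∑ᶠ y ∈ ((ε w)⁻¹ * b) • (R : Set B), Multiplicative.toAdd g y := by rw [smul_smul]
        _ = 0 := hg' _
    · ext x
      simp only [Subgroup.coe_map, Set.mem_image]
      constructor
      · rintro ⟨g, hg, rfl⟩
        have hg' : ∀ b : B, (∑ᶠ x ∈ b • (R : Set B), Multiplicative.toAdd g x) = 0 := hg
        exact ⟨g, ⟨Multiplicative.toAdd g, hg', rfl⟩, rfl⟩
      · rintro ⟨_, ⟨f, hf, rfl⟩, rfl⟩
        exact ⟨Multiplicative.ofAdd f, hf, rfl⟩
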